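/- Let τ be a permutation of length n ≥ 2. Then τ[1,n−1] = τ[2,n] if and only if τ is monotone. -/

import Mathlib

open scoped Classical

noncomputable section

/-- A permutation of length `n`, written in one-line notation as `τ 0, τ 1, …, τ (n-1)`. -/
abbrev Perm' (n : ℕ) := Equiv.Perm (Fin n)

/-- `σ` occurs in `τ` as a consecutive pattern at (0-indexed) starting position `i`:
the window `τ i, …, τ (i+m-1)` of adjacent entries is in the same relative order as `σ`. -/
def OccursAt {m n : ℕ} (σ : Perm' m) (τ : Perm' n) (i : ℕ) : Prop :=
  ∃ h : i + m ≤ n, ∀ a b : Fin m,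
    σ a < σ b ↔
      τ ⟨i + a, by have := a.isLt; omega⟩ < τ ⟨i + b, by have := b.isLt; omega⟩

/-- Consecutive pattern containment `σ ≤ τ`. -/
def PattLE {m n : ℕ} (σ : Perm' m) (τ : Perm' n) : Prop :=
  ∃ i, OccursAt σ τ i

/-- Permutations of arbitrary length: the carrier of the consecutive pattern poset. -/
abbrev PermS : Type := Σ n : ℕ, Perm' n

/-- The order of the consecutive pattern poset. -/
def pLE (p q : PermS) : Prop := PattLE p.2 q.2

/-- The strict order of the consecutive pattern poset. -/
def pLT (p q : PermS) : Prop := pLE p q ∧ p ≠ q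

/-- The covering relation of the consecutive pattern poset. -/
def pCovBy (p q : PermS) : Prop :=
  pLT p q ∧ ∀ r : PermS, pLT p r → pLT r q → False

/-- The open interval `(p,q)` in the consecutive pattern poset. -/
def openInterval (p q : PermS) : Set PermS := {r | pLT p r ∧ pLT r q}

/-- The Hasse diagram of the open interval `(p,q)`: vertices are the permutations strictly
between `p` and `q`, edges are the covering relations of the consecutive pattern poset. -/
def hasse (p q : PermS) : SimpleGraph (openInterval p q) :=
  SimpleGraph.fromRel fun a b => pCovBy a.1 b.1

/-- The interval `[p,q]` is disconnected if the Hasse diagram of `(p,q)` is not connected. -/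
def IntervalDisconnected (p q : PermS) : Prop := ¬ (hasse p q).Connected

/-- `window τ i m` is the reduction of the window of `τ` of length `m` starting at
(0-indexed) position `i`, i.e. the pattern `τ[i+1, i+m]` in 1-indexed notation. -/
def window {n : ℕ} (τ : Perm' n) (i m : ℕ) : Perm' m :=
  if h : i + m ≤ n then
    (Tuple.sort fun a : Fin m => τ ⟨i + a, by have := a.isLt; omega⟩)⁻¹
  else 1

/-- `τ` is monotone, i.e. equal to `12…n` or `n…21`. -/
def IsMonotone {n : ℕ} (τ : Perm' n) : Prop :=
  (∀ a b : Fin n, a ≤ b → τ a ≤ τ b) ∨ (∀ a b : Fin n, a ≤ b → τ b ≤ τ a)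

/-- `τ` has a bifix (a common proper prefix and proper suffix) of length `k`. -/
def HasBifixLen {n : ℕ} (τ : Perm' n) (k : ℕ) : Prop :=
  0 < k ∧ k < n ∧ window τ 0 k = window τ (n - k) k

/-- The length `|x(τ)|` of the exterior of `τ`, the longest bifix of `τ`. -/
def extLen {n : ℕ} (τ : Perm' n) : ℕ := Nat.findGreatest (HasBifixLen τ) n

/-- The exterior `x(τ)` of `τ`: its longest bifix. -/
def extPerm {n : ℕ} (τ : Perm' n) : Perm' (extLen τ) := window τ 0 (extLen τ)

/-- The interior `i(τ) = τ[2,n-1]` of `τ`. -/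
def intPerm {n : ℕ} (τ : Perm' n) : Perm' (n - 2) := window τ 1 (n - 2)

/-- `p` straddles `q`: `p < q`, `p` is both a prefix and a suffix of `q`,
and `p` has no other occurrence in `q`. -/
def Straddles (p q : PermS) : Prop :=
  pLT p q ∧ OccursAt p.2 q.2 0 ∧ OccursAt p.2 q.2 (q.1 - p.1) ∧
    ∀ i, OccursAt p.2 q.2 i → i = 0 ∨ i = q.1 - p.1

/-- The interval `[p,q]` contains a non-trivial disconnected subinterval, i.e. a
subinterval `[a,b]` of rank at least 3 which is disconnected. -/
def HasNontrivDisconSub (p q : PermS) : Prop :=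
  ∃ a b : PermS, pLE p a ∧ pLE a b ∧ pLE b q ∧ a.1 + 3 ≤ b.1 ∧ IntervalDisconnected a b

/-- The finite set of all permutations of length at most `N`. -/
def permsUpTo (N : ℕ) : Finset PermS :=
  (Finset.range (N + 1)).sigma fun n => (Finset.univ : Finset (Perm' n))

/-- The closed interval `[p,q]` of the consecutive pattern poset, as a finite set. -/
def intervalF (p q : PermS) : Finset PermS :=
  (permsUpTo q.1).filter fun r => pLE p r ∧ pLE r q

/-- The number of elements of the interval `[σ,τ]` of rank `r`, i.e. of length `|σ| + r`. -/
def rankCard {m n : ℕ} (σ : Perm' m) (τ : Perm' n) (r : ℕ) : ℕ :=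
  ((permsUpTo n).filter fun p => pLE ⟨m, σ⟩ p ∧ pLE p ⟨n, τ⟩ ∧ p.1 = m + r).card

/-- The direct sum `σ ⊕ π` of two permutations. -/
def dsum {m k : ℕ} (σ : Perm' m) (π : Perm' k) : Perm' (m + k) :=
  finSumFinEquiv.permCongr (σ.sumCongr π)


lemma window_lt_iff {n : ℕ} (τ : Perm' n) {i m : ℕ} (h : i + m ≤ n) (a b : Fin m) :
    window τ i m a < window τ i m b ↔
      τ ⟨i + a, by have := a.isLt; omega⟩ < τ ⟨i + b, by have := b.isLt; omega⟩ := by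
  unfold window
  rw [dif_pos h]
  set f : Fin m → Fin n := fun a : Fin m => τ ⟨i + a, by have := a.isLt; omega⟩ with hf
  have hinj : Function.Injective f := by
    intro x y hxy
    have := τ.injective hxy
    simpa [Fin.ext_iff] using this
  have hsm : StrictMono (f ∘ Tuple.sort f) :=
    (Tuple.monotone_sort f).strictMono_of_injective (hinj.comp (Tuple.sort f).injective)
  rw [← hsm.lt_iff_lt]
  simp [Function.comp, hf]

lemma perm_eq_of_lt_iff {m : ℕ} {σ π : Perm' m} (h : ∀ a b, σ a < σ b ↔ π a < π b) :
    σ = π := by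
  set g : Fin m → Fin m := fun x => π (σ⁻¹ x) with hg
  have hsm : StrictMono g := by
    intro u v huv
    exact (h _ _).mp (by simpa using huv)
  have hr : Set.range g = Set.range (id : Fin m → Fin m) := by
    rw [Set.range_id]
    exact Function.Surjective.range_eq (π.surjective.comp σ⁻¹.surjective)
  haveI : WellFoundedLT (Fin m) := inferInstance
  have hid : g = id := (StrictMono.range_inj (β := Fin m) (γ := Fin m) hsm strictMono_id).mp hr
  have : ∀ a, σ a = π a := by
    intro a
    have := congrFun hid (σ a)
    simpa [hg] using this.symm
  exact Equiv.ext this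

/-- Lemma 2.2: for a permutation `τ` of length `n ≥ 2`,
`τ[1,n-1] = τ[2,n]` if and only if `τ` is monotone. -/
theorem stmt0 {n : ℕ} (hn : 2 ≤ n) (τ : Perm' n) :
    window τ 0 (n - 1) = window τ 1 (n - 1) ↔ IsMonotone τ := by
  have h0 : 0 + (n - 1) ≤ n := by omega
  have h1 : 1 + (n - 1) ≤ n := by omega
  constructor
  · intro heq
    have H : ∀ a b : Fin (n - 1),
        (τ ⟨0 + a, by have := a.isLt; omega⟩ < τ ⟨0 + b, by have := b.isLt; omega⟩ ↔
         τ ⟨1 + a, by have := a.isLt; omega⟩ < τ ⟨1 + b, by have := b.isLt; omega⟩) := by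
      intro a b
      rw [← window_lt_iff τ h0 a b, ← window_lt_iff τ h1 a b, heq]
    have H' : ∀ x y : ℕ, ∀ hx : x + 1 < n, ∀ hy : y + 1 < n,
        (τ ⟨x, by omega⟩ < τ ⟨y, by omega⟩ ↔
         τ ⟨x + 1, by omega⟩ < τ ⟨y + 1, by omega⟩) := by
      intro x y hx hy
      have := H ⟨x, by omega⟩ ⟨y, by omega⟩
      simpa [Nat.add_comm] using this
    have Hadj : ∀ i, ∀ _hi : i + 1 < n,
        ((τ ⟨0, by omega⟩ < τ ⟨1, by omega⟩) ↔
          (τ ⟨i, by omega⟩ < τ ⟨i + 1, by omega⟩)) := by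
      intro i
      induction i with
      | zero => intro h; exact Iff.rfl
      | succ k ih =>
        intro h
        have hk : k + 1 < n := by omega
        rw [ih hk]
        exact H' k (k + 1) (by omega) (by omega)
    have h01 : (⟨0, by omega⟩ : Fin n) ≠ ⟨1, by omega⟩ := by
      simp [Fin.ext_iff]
    rcases lt_or_gt_of_ne (fun hc => h01 (τ.injective hc)) with hup | hdn
    · left
      have adj : ∀ i, (hi : i + 1 < n) → τ ⟨i, by omega⟩ < τ ⟨i + 1, by omega⟩ :=
        fun i hi => (Hadj i hi).mp hup
      have mono : ∀ x y : ℕ, ∀ hx : x < n, ∀ hy : y < n, x < y →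
          τ ⟨x, hx⟩ < τ ⟨y, hy⟩ := by
        intro x y
        induction y with
        | zero => omega
        | succ z ih =>
          intro hx hy hxy
          rcases Nat.lt_or_ge x z with h2 | h2
          · exact (ih hx (by omega) h2).trans (adj z hy)
          · have hxz : x = z := by omega
            subst hxz
            exact adj x hy
      intro a b hab
      rcases eq_or_lt_of_le hab with h2 | h2
      · exact le_of_eq (congrArg τ (Fin.ext (by simpa [Fin.ext_iff, Fin.le_def] using h2)))
      · exact le_of_lt (mono a b a.isLt b.isLt h2)
    · right
      have adj : ∀ i, (hi : i + 1 < n) → τ ⟨i + 1, by omega⟩ < τ ⟨i, by omega⟩ := by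
        intro i hi
        have h2 : τ ⟨i + 1, by omega⟩ ≤ τ ⟨i, by omega⟩ :=
          not_lt.mp ((Hadj i hi).not.mp (not_lt.mpr (le_of_lt hdn)))
        refine lt_of_le_of_ne h2 fun hc => ?_
        have := τ.injective hc
        simp [Fin.ext_iff] at this
      have mono : ∀ x y : ℕ, ∀ hx : x < n, ∀ hy : y < n, x < y →
          τ ⟨y, hy⟩ < τ ⟨x, hx⟩ := by
        intro x y
        induction y with
        | zero => omega
        | succ z ih =>
          intro hx hy hxy
          rcases Nat.lt_or_ge x z with h2 | h2
          · exact (adj z hy).trans (ih hx (by omega) h2)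
          · have hxz : x = z := by omega
            subst hxz
            exact adj x hy
      intro a b hab
      rcases eq_or_lt_of_le hab with h2 | h2
      · exact le_of_eq (congrArg τ (Fin.ext (by simpa [Fin.ext_iff, Fin.le_def] using h2))).symm
      · exact le_of_lt (mono a b a.isLt b.isLt h2)
  · intro hm
    apply perm_eq_of_lt_iff
    intro a b
    rw [window_lt_iff τ h0 a b, window_lt_iff τ h1 a b]
    rcases hm with hup | hdn
    · have hmono : Monotone τ := fun x y hxy => hup x y hxy
      have hs : StrictMono τ := hmono.strictMono_of_injective τ.injective
      rw [hs.lt_iff_lt, hs.lt_iff_lt]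
      simp only [Fin.mk_lt_mk]
      omega
    · have hanti : Antitone τ := fun x y hxy => hdn x y hxy
      have hs : StrictAnti τ := hanti.strictAnti_of_injective τ.injective
      rw [hs.lt_iff_gt, hs.lt_iff_gt]
      simp only [Fin.mk_lt_mk]
      omega

end
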